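/- Let L: ℕ → ℝ be a sequence with √n·L(n) → a·v > 0 as n → ∞ for constants a, v > 0, let (M_n) be a sequence with M_n → M > 0, and for ε > 0 define N(ε) = inf{n : L(n) ≤ ε·M_n}. Assume N(ε) → ∞ as ε → 0. Then ε·√(N(ε)) → a·v/M as ε → 0. -/

import Mathlib

open Filter

/-- Deterministic core of the termination-rule analysis (proof of Theorem 5): if
`√n·L(n) → a·v > 0`, `M_n → M > 0`, `N(ε) = inf{n : L(n) ≤ ε·M_n}`, and `N(ε) → ∞` as
`ε → 0⁺`, then `ε·√(N(ε)) → a·v/M` as `ε → 0⁺`. -/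
theorem stmt16 (L M : ℕ → ℝ) (a v Mlim : ℝ)
    (ha : 0 < a) (hv : 0 < v) (hM : 0 < Mlim)
    (hL : Tendsto (fun n : ℕ => Real.sqrt n * L n) atTop (nhds (a * v)))
    (hMn : Tendsto M atTop (nhds Mlim))
    (N : ℝ → ℕ)
    (hN : ∀ ε : ℝ, 0 < ε → N ε = sInf {n : ℕ | L n ≤ ε * M n})
    (hNinf : Tendsto N (nhdsWithin 0 (Set.Ioi 0)) atTop) :
    Tendsto (fun ε : ℝ => ε * Real.sqrt (N ε)) (nhdsWithin 0 (Set.Ioi 0))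
      (nhds (a * v / Mlim)) := by
  -- limit of lower-bound sequence
  have T1 : Tendsto (fun n : ℕ => Real.sqrt n * L n / M n) atTop
      (nhds (a * v / Mlim)) := hL.div hMn hM.ne'
  -- limit of shifted sequence
  have hshift : Tendsto (fun m : ℕ => Real.sqrt (m + 1) * L m / M m) atTop
      (nhds (a * v / Mlim)) := by
    have h0 : Tendsto (fun m : ℕ => 1 + 1 / (m : ℝ)) atTop (nhds (1 + 0)) :=
      tendsto_const_nhds.add tendsto_one_div_atTop_nhds_zero_nat
    have h1 : Tendsto (fun m : ℕ => Real.sqrt (1 + 1 / (m : ℝ))) atTop (nhds 1) := by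
      have := (Real.continuous_sqrt.tendsto (1 + 0)).comp h0
      simpa [Function.comp_def] using this
    have h2 : Tendsto (fun m : ℕ =>
        Real.sqrt (1 + 1 / (m : ℝ)) * (Real.sqrt m * L m) / M m) atTop
        (nhds (a * v / Mlim)) := by
      have := (h1.mul hL).div hMn hM.ne'
      simpa [Pi.div_def] using this
    refine h2.congr' ?_
    filter_upwards [eventually_ge_atTop 1] with m hm
    have hm0 : (0 : ℝ) < m := by exact_mod_cast hm
    have hsm : Real.sqrt m ≠ 0 := by positivity
    have he : (1 : ℝ) + 1 / m = ((m : ℝ) + 1) / m := by field_simp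
    rw [he, Real.sqrt_div (by positivity), ← mul_assoc, div_mul_cancel₀ _ hsm]
  have T2 : Tendsto (fun n : ℕ => Real.sqrt n * L (n - 1) / M (n - 1)) atTop
      (nhds (a * v / Mlim)) := by
    have := hshift.comp (tendsto_sub_atTop_nat 1)
    refine this.congr' ?_
    filter_upwards [eventually_ge_atTop 1] with n hn
    simp only [Function.comp_apply]
    rw [Nat.cast_sub hn]
    norm_num
  -- eventual positivity of M
  obtain ⟨n0, hn0⟩ := (hMn.eventually (eventually_gt_nhds hM)).exists_forall_of_atTop
  -- squeeze
  have lower := T1.comp hNinf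
  have upper := T2.comp hNinf
  refine tendsto_of_tendsto_of_tendsto_of_le_of_le' lower upper ?_ ?_
  all_goals
    filter_upwards [hNinf.eventually (eventually_ge_atTop (n0 + 1)),
      self_mem_nhdsWithin] with ε hNε (hε : (0:ℝ) < ε)
  all_goals
    have hNe := hN ε hε
    have hpos : 1 ≤ N ε := le_trans (Nat.le_add_left 1 n0) hNε
    have hne : {n : ℕ | L n ≤ ε * M n}.Nonempty := by
      by_contra h
      rw [Set.not_nonempty_iff_eq_empty] at h
      rw [h, Nat.sInf_empty] at hNe
      omega
    have hsqnn : (0 : ℝ) ≤ Real.sqrt (N ε) := Real.sqrt_nonneg _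
  · -- lower bound : √(Nε) L(Nε) / M(Nε) ≤ ε √(Nε)
    have hmem : L (N ε) ≤ ε * M (N ε) := by
      have := Nat.sInf_mem hne
      rwa [← hNe] at this
    have hMp : 0 < M (N ε) := hn0 _ (le_trans (Nat.le_succ n0) hNε)
    simp only [Function.comp_apply]
    rw [div_le_iff₀ hMp]
    nlinarith [mul_le_mul_of_nonneg_left hmem hsqnn]
  · -- upper bound : ε √(Nε) ≤ √(Nε) L(Nε-1) / M(Nε-1)
    have hnot : ¬ (L (N ε - 1) ≤ ε * M (N ε - 1)) := by
      have hlt : N ε - 1 < sInf {n : ℕ | L n ≤ ε * M n} := by omega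
      exact Nat.notMem_of_lt_sInf hlt
    push_neg at hnot
    have hMp : 0 < M (N ε - 1) := hn0 _ (by omega)
    simp only [Function.comp_apply]
    rw [le_div_iff₀ hMp]
    nlinarith [mul_le_mul_of_nonneg_left hnot.le hsqnn]
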